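/- Let M and T be Hermitian complex n×n matrices. Then for every real t ≥ 0, exp(t·L(−M/2, M)) ∘ Ĝ(T) = Ĝ(e^{tM/2} T e^{tM/2}) ∘ exp(t·L(−M/2, M)), where exp on the left-hand sides denotes the exponential of a linear operator on End(F) and e^{tM/2} is the matrix exponential. -/

import Mathlib

set_option synthInstance.maxHeartbeats 1000000
set_option maxHeartbeats 4000000


open scoped Matrix

open ContinuousLinearMap in
/-- `Lhat c A ρ = Σ_{j,k} A j k • (c k * ρ * (c j)†)`. -/
noncomputable def Lhat {F : Type*} [NormedAddCommGroup F] [InnerProductSpace ℂ F]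
    [FiniteDimensional ℂ F] {n : ℕ} (c : Fin n → F →L[ℂ] F)
    (A : Matrix (Fin n) (Fin n) ℂ) : (F →L[ℂ] F) →L[ℂ] (F →L[ℂ] F) :=
  ∑ j, ∑ k, A j k • mulLeftRight ℂ (F →L[ℂ] F) (c k) (adjoint (c j))

open ContinuousLinearMap in
/-- `Ghat c A ρ = Σ_{j,k} A j k • ((c j)† * ρ * c k)`. -/
noncomputable def Ghat {F : Type*} [NormedAddCommGroup F] [InnerProductSpace ℂ F]
    [FiniteDimensional ℂ F] {n : ℕ} (c : Fin n → F →L[ℂ] F)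
    (A : Matrix (Fin n) (Fin n) ℂ) : (F →L[ℂ] F) →L[ℂ] (F →L[ℂ] F) :=
  ∑ j, ∑ k, A j k • mulLeftRight ℂ (F →L[ℂ] F) (adjoint (c j)) (c k)

open ContinuousLinearMap in
/-- The quadratic form `(c, A c) = Σ_{j,k} A j k • ((c j)† * c k)`. -/
noncomputable def quadOp {F : Type*} [NormedAddCommGroup F] [InnerProductSpace ℂ F]
    [FiniteDimensional ℂ F] {n : ℕ} (c : Fin n → F →L[ℂ] F)
    (A : Matrix (Fin n) (Fin n) ℂ) : F →L[ℂ] F :=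
  ∑ j, ∑ k, A j k • (adjoint (c j) * c k)

open ContinuousLinearMap in
/-- `Fhat c A ρ = (c, A c) * ρ`. -/
noncomputable def Fhat {F : Type*} [NormedAddCommGroup F] [InnerProductSpace ℂ F]
    [FiniteDimensional ℂ F] {n : ℕ} (c : Fin n → F →L[ℂ] F)
    (A : Matrix (Fin n) (Fin n) ℂ) : (F →L[ℂ] F) →L[ℂ] (F →L[ℂ] F) :=
  mul ℂ (F →L[ℂ] F) (quadOp c A)

open ContinuousLinearMap in
/-- `Bhat c A ρ = ρ * (c, A c)`. -/
noncomputable def Bhat {F : Type*} [NormedAddCommGroup F] [InnerProductSpace ℂ F]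
    [FiniteDimensional ℂ F] {n : ℕ} (c : Fin n → F →L[ℂ] F)
    (A : Matrix (Fin n) (Fin n) ℂ) : (F →L[ℂ] F) →L[ℂ] (F →L[ℂ] F) :=
  mulLeftRight ℂ (F →L[ℂ] F) 1 (quadOp c A)

/-- The Liouvillian
`L(A, M) = L̂(−A − A† − M) + Ĝ(M) + F̂(A + M) + B̂(A† + M) − (tr M)·id`. -/
noncomputable def Liou {F : Type*} [NormedAddCommGroup F] [InnerProductSpace ℂ F]
    [FiniteDimensional ℂ F] {n : ℕ} (c : Fin n → F →L[ℂ] F)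
    (A M : Matrix (Fin n) (Fin n) ℂ) : (F →L[ℂ] F) →L[ℂ] (F →L[ℂ] F) :=
  Lhat c (-A - Aᴴ - M) + Ghat c M + Fhat c (A + M) + Bhat c (Aᴴ + M)
    - M.trace • (1 : (F →L[ℂ] F) →L[ℂ] (F →L[ℂ] F))

/-- The exponential of a linear operator on the finite-dimensional space `End(F)`
(i.e. of a superoperator), given by `NormedSpace.exp` with respect to the operator norm. -/
noncomputable def superExp {F : Type*} [NormedAddCommGroup F] [InnerProductSpace ℂ F]
    [FiniteDimensional ℂ F]
    (x : (F →L[ℂ] F) →L[ℂ] F →L[ℂ] F) : (F →L[ℂ] F) →L[ℂ] F →L[ℂ] F :=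
  letI R : NonUnitalSeminormedRing ((F →L[ℂ] F) →L[ℂ] F →L[ℂ] F) := inferInstance
  @NormedSpace.exp _ _
    R.toPseudoMetricSpace.toUniformSpace.toTopologicalSpace
    (@NonUnitalSeminormedRing.toIsTopologicalRing _ R) x

attribute [local instance] Matrix.linftyOpNormedAddCommGroup Matrix.linftyOpNormedSpace
  Matrix.linftyOpNormedRing Matrix.linftyOpNormedAlgebra


section Helpers

open ContinuousLinearMap Finset

lemma sum3_comm {E : Type*} [AddCommMonoid E] {α : Type*} [Fintype α]
    (f : α → α → α → E) :
    ∑ a, ∑ b, ∑ p, f a b p = ∑ p, ∑ b, ∑ a, f a b p := by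
  calc ∑ a, ∑ b, ∑ p, f a b p
      = ∑ a, ∑ p, ∑ b, f a b p := Finset.sum_congr rfl (fun _ _ => Finset.sum_comm)
    _ = ∑ p, ∑ a, ∑ b, f a b p := Finset.sum_comm
    _ = ∑ p, ∑ b, ∑ a, f a b p := Finset.sum_congr rfl (fun _ _ => Finset.sum_comm)

lemma sum4_comm {E : Type*} [AddCommMonoid E] {α : Type*} [Fintype α]
    (f : α → α → α → α → E) :
    ∑ a, ∑ b, ∑ p, ∑ q, f a b p q = ∑ p, ∑ q, ∑ a, ∑ b, f a b p q := by
  calc ∑ a, ∑ b, ∑ p, ∑ q, f a b p q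
      = ∑ a, ∑ p, ∑ b, ∑ q, f a b p q :=
        Finset.sum_congr rfl (fun _ _ => Finset.sum_comm)
    _ = ∑ p, ∑ a, ∑ b, ∑ q, f a b p q := Finset.sum_comm
    _ = ∑ p, ∑ a, ∑ q, ∑ b, f a b p q :=
        Finset.sum_congr rfl (fun _ _ => Finset.sum_congr rfl (fun _ _ => Finset.sum_comm))
    _ = ∑ p, ∑ q, ∑ a, ∑ b, f a b p q :=
        Finset.sum_congr rfl (fun _ _ => Finset.sum_comm)

variable {F : Type*} [NormedAddCommGroup F] [InnerProductSpace ℂ F]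
    [FiniteDimensional ℂ F] {n : ℕ}

lemma ghat_apply (c : Fin n → F →L[ℂ] F) (S : Matrix (Fin n) (Fin n) ℂ) (ρ : F →L[ℂ] F) :
    Ghat c S ρ = ∑ j, ∑ k, S j k • (adjoint (c j) * ρ * c k) := by
  simp [Ghat, ContinuousLinearMap.sum_apply, ContinuousLinearMap.smul_apply,
    mulLeftRight_apply]

lemma comm1 (c : Fin n → F →L[ℂ] F)
    (hcd : ∀ j k, c j * ContinuousLinearMap.adjoint (c k)
      + ContinuousLinearMap.adjoint (c k) * c j = if j = k then 1 else 0)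
    (hdd : ∀ j k, ContinuousLinearMap.adjoint (c j) * ContinuousLinearMap.adjoint (c k)
      + ContinuousLinearMap.adjoint (c k) * ContinuousLinearMap.adjoint (c j) = 0)
    (M : Matrix (Fin n) (Fin n) ℂ) (j : Fin n) :
    quadOp c M * adjoint (c j) - adjoint (c j) * quadOp c M
    = ∑ l, M l j • adjoint (c l) := by
  have h1 : ∀ m, c m * adjoint (c j) = (if m = j then 1 else 0) - adjoint (c j) * c m :=
    fun m => eq_sub_of_add_eq (hcd m j)
  have h2 : ∀ l, adjoint (c l) * adjoint (c j) = -(adjoint (c j) * adjoint (c l)) :=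
    fun l => eq_neg_of_add_eq_zero_left (hdd l j)
  have key : ∀ l m, (adjoint (c l) * c m) * adjoint (c j)
      = (if m = j then adjoint (c l) else 0) + adjoint (c j) * (adjoint (c l) * c m) := by
    intro l m
    rw [mul_assoc, h1 m, mul_sub, ← mul_assoc, h2 l]
    simp [mul_ite, sub_neg_eq_add, mul_assoc]
  simp only [quadOp, Finset.sum_mul, Finset.mul_sum, smul_mul_assoc, mul_smul_comm,
    key, smul_add, Finset.sum_add_distrib, add_sub_cancel_right]
  simp [smul_ite, Finset.sum_ite_eq']

lemma comm2 (c : Fin n → F →L[ℂ] F)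
    (hcc : ∀ j k, c j * c k + c k * c j = 0)
    (hcd : ∀ j k, c j * ContinuousLinearMap.adjoint (c k)
      + ContinuousLinearMap.adjoint (c k) * c j = if j = k then 1 else 0)
    (M : Matrix (Fin n) (Fin n) ℂ) (k : Fin n) :
    c k * quadOp c M - quadOp c M * c k = ∑ m, M k m • c m := by
  have h1 : ∀ l, c k * adjoint (c l) = (if k = l then 1 else 0) - adjoint (c l) * c k :=
    fun l => eq_sub_of_add_eq (hcd k l)
  have h2 : ∀ m, c k * c m = -(c m * c k) :=
    fun m => eq_neg_of_add_eq_zero_left (hcc k m)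
  have key : ∀ l m, c k * (adjoint (c l) * c m)
      = (if k = l then c m else 0) + (adjoint (c l) * c m) * c k := by
    intro l m
    rw [← mul_assoc, h1 l, sub_mul, mul_assoc, h2 m]
    simp [ite_mul, sub_neg_eq_add, mul_assoc]
  simp only [quadOp, Finset.sum_mul, Finset.mul_sum, smul_mul_assoc, mul_smul_comm,
    key, smul_add, Finset.sum_add_distrib, add_sub_cancel_right]
  simp [smul_ite, Finset.sum_ite_eq]

end Helpers


section Parts

open ContinuousLinearMap Finset

variable {F : Type*} [NormedAddCommGroup F] [InnerProductSpace ℂ F]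
    [FiniteDimensional ℂ F] {n : ℕ} (c : Fin n → F →L[ℂ] F)

lemma partF
    (hcd : ∀ j k, c j * ContinuousLinearMap.adjoint (c k)
      + ContinuousLinearMap.adjoint (c k) * c j = if j = k then 1 else 0)
    (hdd : ∀ j k, ContinuousLinearMap.adjoint (c j) * ContinuousLinearMap.adjoint (c k)
      + ContinuousLinearMap.adjoint (c k) * ContinuousLinearMap.adjoint (c j) = 0)
    (M S : Matrix (Fin n) (Fin n) ℂ) :
    Fhat c M * Ghat c S - Ghat c S * Fhat c M = Ghat c (M * S) := by
  refine ContinuousLinearMap.ext fun ρ => ?_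
  have hc1 := comm1 c hcd hdd M
  have key : ∀ j k, quadOp c M * (adjoint (c j) * ρ * c k)
      - adjoint (c j) * (quadOp c M * ρ) * c k
      = ∑ l, M l j • (adjoint (c l) * ρ * c k) := by
    intro j k
    have h : quadOp c M * (adjoint (c j) * ρ * c k)
        - adjoint (c j) * (quadOp c M * ρ) * c k
        = (quadOp c M * adjoint (c j) - adjoint (c j) * quadOp c M) * ρ * c k := by
      noncomm_ring
    rw [h, hc1 j]
    simp [Finset.sum_mul, smul_mul_assoc]
  simp only [ContinuousLinearMap.sub_apply, ContinuousLinearMap.mul_apply, Fhat,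
    mul_apply', ghat_apply, Finset.mul_sum, mul_smul_comm, smul_mul_assoc]
  rw [← Finset.sum_sub_distrib]
  simp only [← Finset.sum_sub_distrib, ← smul_sub]
  calc ∑ j, ∑ k, S j k • (quadOp c M * (adjoint (c j) * ρ * c k)
        - adjoint (c j) * (quadOp c M * ρ) * c k)
      = ∑ j, ∑ k, ∑ l, (S j k * M l j) • (adjoint (c l) * ρ * c k) := by
        simp only [key, Finset.smul_sum, smul_smul]
    _ = ∑ l, ∑ k, ∑ j, (S j k * M l j) • (adjoint (c l) * ρ * c k) := sum3_comm _
    _ = ∑ l, ∑ k, (M * S) l k • (adjoint (c l) * ρ * c k) := by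
        simp [Matrix.mul_apply, Finset.sum_smul, mul_comm]

lemma partB
    (hcc : ∀ j k, c j * c k + c k * c j = 0)
    (hcd : ∀ j k, c j * ContinuousLinearMap.adjoint (c k)
      + ContinuousLinearMap.adjoint (c k) * c j = if j = k then 1 else 0)
    (M S : Matrix (Fin n) (Fin n) ℂ) :
    Bhat c M * Ghat c S - Ghat c S * Bhat c M = Ghat c (S * M) := by
  refine ContinuousLinearMap.ext fun ρ => ?_
  have hc2 := comm2 c hcc hcd M
  have key : ∀ j k, adjoint (c j) * ρ * c k * quadOp c M
      - adjoint (c j) * (ρ * quadOp c M) * c k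
      = ∑ m, M k m • (adjoint (c j) * ρ * c m) := by
    intro j k
    have h : adjoint (c j) * ρ * c k * quadOp c M
        - adjoint (c j) * (ρ * quadOp c M) * c k
        = adjoint (c j) * ρ * (c k * quadOp c M - quadOp c M * c k) := by
      noncomm_ring
    rw [h, hc2 k]
    simp [Finset.mul_sum, mul_smul_comm, mul_assoc]
  simp only [ContinuousLinearMap.sub_apply, ContinuousLinearMap.mul_apply, Bhat,
    mulLeftRight_apply, ghat_apply, one_mul, Finset.sum_mul, mul_smul_comm, smul_mul_assoc]
  rw [← Finset.sum_sub_distrib]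
  simp only [← Finset.sum_sub_distrib, ← smul_sub]
  calc ∑ j, ∑ k, S j k • (adjoint (c j) * ρ * c k * quadOp c M
        - adjoint (c j) * (ρ * quadOp c M) * c k)
      = ∑ j, ∑ k, ∑ m, (S j k * M k m) • (adjoint (c j) * ρ * c m) := by
        simp only [key, Finset.smul_sum, smul_smul]
    _ = ∑ j, ∑ m, ∑ k, (S j k * M k m) • (adjoint (c j) * ρ * c m) :=
        Finset.sum_congr rfl (fun _ _ => Finset.sum_comm)
    _ = ∑ j, ∑ m, (S * M) j m • (adjoint (c j) * ρ * c m) := by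
        simp [Matrix.mul_apply, Finset.sum_smul]

lemma partG
    (hcc : ∀ j k, c j * c k + c k * c j = 0)
    (hdd : ∀ j k, ContinuousLinearMap.adjoint (c j) * ContinuousLinearMap.adjoint (c k)
      + ContinuousLinearMap.adjoint (c k) * ContinuousLinearMap.adjoint (c j) = 0)
    (M S : Matrix (Fin n) (Fin n) ℂ) :
    Ghat c M * Ghat c S = Ghat c S * Ghat c M := by
  refine ContinuousLinearMap.ext fun ρ => ?_
  have hc : ∀ l j, adjoint (c l) * adjoint (c j) = -(adjoint (c j) * adjoint (c l)) :=
    fun l j => eq_neg_of_add_eq_zero_left (hdd l j)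
  have hd : ∀ k m, c k * c m = -(c m * c k) :=
    fun k m => eq_neg_of_add_eq_zero_left (hcc k m)
  simp only [ContinuousLinearMap.mul_apply, ghat_apply, Finset.mul_sum, Finset.sum_mul,
    mul_smul_comm, smul_mul_assoc, Finset.smul_sum, smul_smul]
  calc ∑ j, ∑ k, ∑ l, ∑ m, (M j k * S l m) •
        (adjoint (c j) * (adjoint (c l) * ρ * c m) * c k)
      = ∑ l, ∑ m, ∑ j, ∑ k, (M j k * S l m) •
        (adjoint (c j) * (adjoint (c l) * ρ * c m) * c k) := sum4_comm _
    _ = ∑ l, ∑ m, ∑ j, ∑ k, (S l m * M j k) •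
        (adjoint (c l) * (adjoint (c j) * ρ * c k) * c m) := by
        refine Finset.sum_congr rfl fun l _ => Finset.sum_congr rfl fun m _ =>
          Finset.sum_congr rfl fun j _ => Finset.sum_congr rfl fun k _ => ?_
        rw [mul_comm (M j k)]
        congr 1
        have : adjoint (c j) * (adjoint (c l) * ρ * c m) * c k
            = (adjoint (c j) * adjoint (c l)) * ρ * (c m * c k) := by noncomm_ring
        have h2 : adjoint (c l) * (adjoint (c j) * ρ * c k) * c m
            = (adjoint (c l) * adjoint (c j)) * ρ * (c k * c m) := by noncomm_ring
        rw [this, h2, hc l j, hd k m]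
        noncomm_ring

end Parts


section CLMHelp
variable {E : Type*} [NormedAddCommGroup E] [NormedSpace ℂ E]

lemma smul_mul_clm (a : ℂ) (X Y : E →L[ℂ] E) : (a • X) * Y = a • (X * Y) :=
  ContinuousLinearMap.ext fun _ => rfl

lemma mul_smul_clm (a : ℂ) (X Y : E →L[ℂ] E) : X * (a • Y) = a • (X * Y) :=
  ContinuousLinearMap.ext fun v => X.map_smul a (Y v)

end CLMHelp

section Assemble

open ContinuousLinearMap Finset

variable {F : Type*} [NormedAddCommGroup F] [InnerProductSpace ℂ F]
    [FiniteDimensional ℂ F] {n : ℕ} (c : Fin n → F →L[ℂ] F)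

lemma lhat_zero : Lhat c (0 : Matrix (Fin n) (Fin n) ℂ) = 0 := by
  simp [Lhat]

lemma ghat_add (A B : Matrix (Fin n) (Fin n) ℂ) :
    Ghat c (A + B) = Ghat c A + Ghat c B := by
  simp [Ghat, Matrix.add_apply, add_smul, Finset.sum_add_distrib]

lemma ghat_smul (a : ℂ) (A : Matrix (Fin n) (Fin n) ℂ) :
    Ghat c (a • A) = a • Ghat c A := by
  simp [Ghat, Matrix.smul_apply, smul_smul, Finset.smul_sum]

lemma quadOp_smul (a : ℂ) (A : Matrix (Fin n) (Fin n) ℂ) :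
    quadOp c (a • A) = a • quadOp c A := by
  simp [quadOp, Matrix.smul_apply, smul_smul, Finset.smul_sum]

lemma fhat_smul (a : ℂ) (A : Matrix (Fin n) (Fin n) ℂ) :
    Fhat c (a • A) = a • Fhat c A := by
  simp [Fhat, quadOp_smul, map_smul]

lemma bhat_smul (a : ℂ) (A : Matrix (Fin n) (Fin n) ℂ) :
    Bhat c (a • A) = a • Bhat c A := by
  simp only [Bhat, quadOp_smul]
  exact map_smul (mulLeftRight ℂ (F →L[ℂ] F) 1) a (quadOp c A)

lemma liou_eq (M : Matrix (Fin n) (Fin n) ℂ) (hM : M.IsHermitian) :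
    Liou c (-((2⁻¹ : ℂ) • M)) M
      = Ghat c M + (2⁻¹ : ℂ) • Fhat c M + (2⁻¹ : ℂ) • Bhat c M
        - M.trace • (1 : (F →L[ℂ] F) →L[ℂ] (F →L[ℂ] F)) := by
  have hAH : (-((2⁻¹ : ℂ) • M))ᴴ = -((2⁻¹ : ℂ) • M) := by
    rw [Matrix.conjTranspose_neg, Matrix.conjTranspose_smul, hM.eq]
    norm_num
  have h0 : -(-((2⁻¹ : ℂ) • M)) - (-((2⁻¹ : ℂ) • M))ᴴ - M = 0 := by
    rw [hAH]
    rw [neg_neg, sub_neg_eq_add, ← add_smul]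
    norm_num
  have h1 : -((2⁻¹ : ℂ) • M) + M = (2⁻¹ : ℂ) • M := by
    rw [neg_add_eq_sub, ← one_smul ℂ M, smul_smul, ← sub_smul]
    norm_num
  rw [Liou, h0, lhat_zero, hAH, h1, fhat_smul, bhat_smul]
  abel

lemma commMain
    (hcc : ∀ j k, c j * c k + c k * c j = 0)
    (hcd : ∀ j k, c j * ContinuousLinearMap.adjoint (c k)
      + ContinuousLinearMap.adjoint (c k) * c j = if j = k then 1 else 0)
    (hdd : ∀ j k, ContinuousLinearMap.adjoint (c j) * ContinuousLinearMap.adjoint (c k)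
      + ContinuousLinearMap.adjoint (c k) * ContinuousLinearMap.adjoint (c j) = 0)
    (M : Matrix (Fin n) (Fin n) ℂ) (hM : M.IsHermitian)
    (S : Matrix (Fin n) (Fin n) ℂ) :
    Liou c (-((2⁻¹ : ℂ) • M)) M * Ghat c S - Ghat c S * Liou c (-((2⁻¹ : ℂ) • M)) M
      = Ghat c ((2⁻¹ : ℂ) • (M * S + S * M)) := by
  have e1 := partG c hcc hdd M S
  have e2 := partF c hcd hdd M S
  have e3 := partB c hcc hcd M S
  rw [liou_eq c M hM, ghat_smul, ghat_add, ← e2, ← e3]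
  simp only [add_mul, sub_mul, mul_add, mul_sub, smul_mul_clm, mul_smul_clm,
    one_mul, mul_one, smul_sub, smul_add]
  rw [e1]
  abel

end Assemble


section ExpStuff
open NormedSpace

variable {A₁ A₂ : Type*} [NormedAddCommGroup A₁] [NormedSpace ℂ A₁] [CompleteSpace A₁]
  [NormedAddCommGroup A₂] [NormedSpace ℂ A₂] [CompleteSpace A₂]

lemma intertwine (φ : A₁ →L[ℂ] A₂) (d : A₁ →L[ℂ] A₁) (e : A₂ →L[ℂ] A₂)
    (h : ∀ x, φ (d x) = e (φ x)) (x : A₁) :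
    φ (NormedSpace.exp d x) = NormedSpace.exp e (φ x) := by
  have hn : ∀ (k : ℕ) (y : A₁), φ ((d ^ k) y) = (e ^ k) (φ y) := by
    intro k
    induction k with
    | zero => intro y; simp
    | succ k ih =>
      intro y
      rw [pow_succ, ContinuousLinearMap.mul_apply, ih (d y), h,
        pow_succ, ContinuousLinearMap.mul_apply]
  have hs1 : Summable fun k : ℕ => ((k.factorial : ℂ)⁻¹) • d ^ k := expSeries_summable' d
  have hs2 : Summable fun k : ℕ => ((k.factorial : ℂ)⁻¹) • e ^ k := expSeries_summable' e
  have hs1' : Summable fun k : ℕ => ((k.factorial : ℂ)⁻¹) • (d ^ k) x := by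
    have := hs1.map (ContinuousLinearMap.apply ℂ A₁ x)
      (ContinuousLinearMap.apply ℂ A₁ x).continuous
    exact this
  have e1 : (∑' k : ℕ, ((k.factorial : ℂ)⁻¹) • d ^ k) x
      = ∑' k : ℕ, ((k.factorial : ℂ)⁻¹) • (d ^ k) x := by
    simpa using (ContinuousLinearMap.apply ℂ A₁ x).map_tsum hs1
  have e2 : (∑' k : ℕ, ((k.factorial : ℂ)⁻¹) • e ^ k) (φ x)
      = ∑' k : ℕ, ((k.factorial : ℂ)⁻¹) • (e ^ k) (φ x) := by
    simpa using (ContinuousLinearMap.apply ℂ A₂ (φ x)).map_tsum hs2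
  rw [exp_eq_tsum ℂ, exp_eq_tsum ℂ, e1, e2, φ.map_tsum hs1']
  simp only [map_smul, hn]

variable {A : Type*} [NormedRing A] [NormedAlgebra ℂ A] [CompleteSpace A]

lemma exp_left_mul (a x : A) (d : A →L[ℂ] A) (hd : ∀ y, d y = a * y)
    (r : A →L[ℂ] A) (hr : ∀ y, r y = y * x) :
    NormedSpace.exp d x = NormedSpace.exp a * x := by
  have hn : ∀ (k : ℕ) (y : A), (d ^ k) y = a ^ k * y := by
    intro k
    induction k with
    | zero => intro y; simp
    | succ k ih =>
      intro y
      rw [pow_succ, ContinuousLinearMap.mul_apply, hd, ih, pow_succ, mul_assoc]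
  have hs : Summable fun k : ℕ => ((k.factorial : ℂ)⁻¹) • a ^ k := expSeries_summable' a
  have hs1 : Summable fun k : ℕ => ((k.factorial : ℂ)⁻¹) • d ^ k := expSeries_summable' d
  have e1 : (∑' k : ℕ, ((k.factorial : ℂ)⁻¹) • d ^ k) x
      = ∑' k : ℕ, ((k.factorial : ℂ)⁻¹) • (d ^ k) x := by
    simpa using (ContinuousLinearMap.apply ℂ A x).map_tsum hs1
  rw [exp_eq_tsum ℂ, exp_eq_tsum ℂ, e1, ← hr (∑' k : ℕ, ((k.factorial : ℂ)⁻¹) • a ^ k),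
    r.map_tsum hs]
  simp [hn, hr, smul_mul_assoc]

lemma exp_right_mul (a x : A) (d : A →L[ℂ] A) (hd : ∀ y, d y = y * a)
    (l : A →L[ℂ] A) (hl : ∀ y, l y = x * y) :
    NormedSpace.exp d x = x * NormedSpace.exp a := by
  have hn : ∀ (k : ℕ) (y : A), (d ^ k) y = y * a ^ k := by
    intro k
    induction k with
    | zero => intro y; simp
    | succ k ih =>
      intro y
      rw [pow_succ, ContinuousLinearMap.mul_apply, hd, ih, mul_assoc, ← pow_succ']
  have hs : Summable fun k : ℕ => ((k.factorial : ℂ)⁻¹) • a ^ k := expSeries_summable' a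
  have hs1 : Summable fun k : ℕ => ((k.factorial : ℂ)⁻¹) • d ^ k := expSeries_summable' d
  have e1 : (∑' k : ℕ, ((k.factorial : ℂ)⁻¹) • d ^ k) x
      = ∑' k : ℕ, ((k.factorial : ℂ)⁻¹) • (d ^ k) x := by
    simpa using (ContinuousLinearMap.apply ℂ A x).map_tsum hs1
  rw [exp_eq_tsum ℂ, exp_eq_tsum ℂ, e1, ← hl (∑' k : ℕ, ((k.factorial : ℂ)⁻¹) • a ^ k),
    l.map_tsum hs]
  simp [hn, hl, mul_smul_comm]

end ExpStuff




/-- Abbreviation for `NormedSpace.exp ℂ` with instance arguments derived from a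
`NormedRing` instance. -/
noncomputable def expA {A : Type*} [NormedRing A] [NormedAlgebra ℂ A] : A → A :=
  NormedSpace.exp

section Master

open NormedSpace ContinuousLinearMap

variable {Mt A : Type*} [NormedRing Mt] [NormedAlgebra ℂ Mt] [CompleteSpace Mt]
  [NormedRing A] [NormedAlgebra ℂ A] [CompleteSpace A]

lemma master (φ : Mt →L[ℂ] A) (L : A) (N T : Mt)
    (dl dr : Mt →L[ℂ] Mt) (hdl : ∀ y, dl y = N * y) (hdr : ∀ y, dr y = y * N)
    (h : ∀ S, φ ((dl + dr) S) = L * φ S - φ S * L) :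
    expA L * φ T = φ (expA N * T * expA N) * expA L := by
  show NormedSpace.exp L * φ T
      = φ (NormedSpace.exp N * T * NormedSpace.exp N) * NormedSpace.exp L
  -- left/right multiplication operators on `A`
  set lm : A →L[ℂ] A := ContinuousLinearMap.mul ℂ A L with hlm
  set rm : A →L[ℂ] A := (ContinuousLinearMap.mul ℂ A).flip L with hrm
  have hlm' : ∀ y, lm y = L * y := fun y => rfl
  have hrm' : ∀ y, rm y = y * L := fun y => rfl
  have hφd : ∀ S, φ ((dl + dr) S) = (lm - rm) (φ S) := by
    intro S
    rw [h S, ContinuousLinearMap.sub_apply, hlm', hrm']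
  have key := intertwine φ (dl + dr) (lm - rm) hφd T
  -- exponential of `dl + dr` applied to `T`
  have hCM : Commute dl dr := by
    refine ContinuousLinearMap.ext fun y => ?_
    show dl (dr y) = dr (dl y)
    rw [hdl, hdr, hdr, hdl, mul_assoc]
  have hsplit : NormedSpace.exp (dl + dr) T
      = NormedSpace.exp N * T * NormedSpace.exp N := by
    let +nondep : NormedAlgebra ℚ (Mt →L[ℂ] Mt) := .restrictScalars ℚ ℂ _
    rw [NormedSpace.exp_add_of_commute hCM, ContinuousLinearMap.mul_apply,
      exp_right_mul N T dr hdr (ContinuousLinearMap.mul ℂ Mt T) (fun y => rfl),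
      exp_left_mul N (T * NormedSpace.exp N) dl hdl
        ((ContinuousLinearMap.mul ℂ Mt).flip (T * NormedSpace.exp N)) (fun y => rfl),
      mul_assoc]
  -- exponential of `lm - rm` applied to `φ T`
  have hCB : Commute lm (-rm) := by
    refine ContinuousLinearMap.ext fun y => ?_
    show lm ((-rm) y) = (-rm) (lm y)
    simp only [ContinuousLinearMap.neg_apply, hlm', hrm', mul_neg, neg_mul, neg_inj,
      mul_assoc]
  have hsplitB : NormedSpace.exp (lm - rm)
      = NormedSpace.exp lm * NormedSpace.exp (-rm) := by
    let +nondep : NormedAlgebra ℚ (A →L[ℂ] A) := .restrictScalars ℚ ℂ _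
    rw [sub_eq_add_neg, NormedSpace.exp_add_of_commute hCB]
  have h1 : NormedSpace.exp (-rm) (φ T) = φ T * NormedSpace.exp (-L) :=
    exp_right_mul (-L) (φ T) (-rm)
      (fun y => by rw [ContinuousLinearMap.neg_apply, hrm', mul_neg])
      (ContinuousLinearMap.mul ℂ A (φ T)) (fun y => rfl)
  have h2 : NormedSpace.exp lm (φ T * NormedSpace.exp (-L))
      = NormedSpace.exp L * (φ T * NormedSpace.exp (-L)) :=
    exp_left_mul L (φ T * NormedSpace.exp (-L)) lm hlm'
      ((ContinuousLinearMap.mul ℂ A).flip (φ T * NormedSpace.exp (-L))) (fun y => rfl)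
  have hinv : NormedSpace.exp (-L) * NormedSpace.exp L = 1 := by
    let +nondep : NormedAlgebra ℚ A := .restrictScalars ℚ ℂ _
    rw [← NormedSpace.exp_add_of_commute (Commute.refl L).neg_left, neg_add_cancel,
      NormedSpace.exp_zero]
  have main : φ (NormedSpace.exp (dl + dr) T)
      = NormedSpace.exp L * (φ T * NormedSpace.exp (-L)) := by
    rw [key, hsplitB, ContinuousLinearMap.mul_apply, h1, h2]
  rw [← hsplit, main, mul_assoc, mul_assoc, hinv, mul_one]

end Master

/-- for Hermitian `M`, `T` and `t ≥ 0`,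
`exp(t·L(−M/2, M)) ∘ Ĝ(T) = Ĝ(e^{tM/2} T e^{tM/2}) ∘ exp(t·L(−M/2, M))`. -/
theorem stmt14 {n : ℕ} (hn : 0 < n)
    {F : Type*} [NormedAddCommGroup F] [InnerProductSpace ℂ F] [FiniteDimensional ℂ F]
    (c : Fin n → F →L[ℂ] F)
    (hcc : ∀ j k, c j * c k + c k * c j = 0)
    (hcd : ∀ j k, c j * ContinuousLinearMap.adjoint (c k)
      + ContinuousLinearMap.adjoint (c k) * c j = if j = k then 1 else 0)
    (hdd : ∀ j k, ContinuousLinearMap.adjoint (c j) * ContinuousLinearMap.adjoint (c k)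
      + ContinuousLinearMap.adjoint (c k) * ContinuousLinearMap.adjoint (c j) = 0)
    (M T : Matrix (Fin n) (Fin n) ℂ) (hM : M.IsHermitian) (hT : T.IsHermitian)
    (t : ℝ) (ht : 0 ≤ t) :
    superExp ((t : ℂ) • Liou c (-((2⁻¹ : ℂ) • M)) M) * Ghat c T
      = Ghat c (NormedSpace.exp (((t : ℂ) / 2) • M) * T
            * NormedSpace.exp (((t : ℂ) / 2) • M))
        * superExp ((t : ℂ) • Liou c (-((2⁻¹ : ℂ) • M)) M) := by
  classical
  have hGadd := ghat_add c
  have hGsmul := ghat_smul c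
  let φlin : Matrix (Fin n) (Fin n) ℂ →ₗ[ℂ] ((F →L[ℂ] F) →L[ℂ] F →L[ℂ] F) :=
    { toFun := Ghat c, map_add' := hGadd, map_smul' := hGsmul }
  let φ : Matrix (Fin n) (Fin n) ℂ →L[ℂ] ((F →L[ℂ] F) →L[ℂ] F →L[ℂ] F) :=
    LinearMap.toContinuousLinearMap φlin
  have hφ : ∀ S, φ S = Ghat c S := fun S => rfl
  set N : Matrix (Fin n) (Fin n) ℂ := ((t : ℂ) / 2) • M with hN
  let dMl : Matrix (Fin n) (Fin n) ℂ →L[ℂ] Matrix (Fin n) (Fin n) ℂ :=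
    LinearMap.toContinuousLinearMap (LinearMap.mulLeft ℂ N)
  let dMr : Matrix (Fin n) (Fin n) ℂ →L[ℂ] Matrix (Fin n) (Fin n) ℂ :=
    LinearMap.toContinuousLinearMap (LinearMap.mulRight ℂ N)
  have hdMl : ∀ S, dMl S = N * S := fun S => rfl
  have hdMr : ∀ S, dMr S = S * N := fun S => rfl
  have h : ∀ S, φ ((dMl + dMr) S)
      = ((t : ℂ) • Liou c (-((2⁻¹ : ℂ) • M)) M) * φ S
        - φ S * ((t : ℂ) • Liou c (-((2⁻¹ : ℂ) • M)) M) := by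
    intro S
    have h1 : (dMl + dMr) S = N * S + S * N := rfl
    have h2 : N * S + S * N = (t : ℂ) • ((2⁻¹ : ℂ) • (M * S + S * M)) := by
      rw [hN, Matrix.smul_mul, Matrix.mul_smul, ← smul_add, smul_smul, div_eq_mul_inv]
    rw [hφ, h1, h2, ghat_smul, ← commMain c hcc hcd hdd M hM S, hφ,
      smul_mul_clm, mul_smul_clm, smul_sub]
  have m := master φ ((t : ℂ) • Liou c (-((2⁻¹ : ℂ) • M)) M) N T dMl dMr hdMl hdMr h
  have hs : superExp ((t : ℂ) • Liou c (-((2⁻¹ : ℂ) • M)) M)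
      = expA ((t : ℂ) • Liou c (-((2⁻¹ : ℂ) • M)) M) := rfl
  have hsN : NormedSpace.exp N = expA N := rfl
  rw [hs, hsN, ← hφ T, ← hφ (expA N * T * expA N)]
  exact m
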